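/- Let G be a compact connected topological group with Haar measure μ, λ a Borel probability measure on G with κ ≥ 2ρ⁺(λ) > 0, and λ = κλ₁ + (1−κ)λ₂ with λ₁, λ₂ probability measures on G. Then G is λ₁-ergodic, i.e., every measurable Y ⊆ G with e_{λ₁}(Y) = 0 has μ(Y) ∈ {0,1}. -/

import Mathlib

open MeasureTheory
open scoped ENNReal

/-- `e_ν(Y) = ∫ μ(Yg \ Y) dν(g)` for a measure `ν` on the group `G` acting on
itself by translations, `μ` being the Haar probability measure. -/
noncomputable def eG {G : Type*} [Group G] [MeasurableSpace G]
    (μ ν : Measure G) (Y : Set G) : ℝ≥0∞ :=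
  ∫⁻ g, μ ((fun x => x * g) '' Y \ Y) ∂ν

/-- `ρ⁺(ν)`: top of the spectrum on `L²₀(G,μ)` of the averaging operator of `ν`. -/
noncomputable def rhoPlusG {G : Type*} [Group G] [MeasurableSpace G]
    (μ ν : Measure G) : ℝ :=
  sSup { r : ℝ | ∃ f : G → ℝ, MemLp f 2 μ ∧ (∫ x, f x ∂μ) = 0 ∧
    (∫ x, f x ^ 2 ∂μ) ≠ 0 ∧
    r = (∫ g, (∫ x, f (x * g) * f x ∂μ) ∂ν) / (∫ x, f x ^ 2 ∂μ) }

/-- The expansion constant `h(ν)`. -/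
noncomputable def hExpG {G : Type*} [Group G] [MeasurableSpace G]
    (μ ν : Measure G) : ℝ :=
  sInf { r : ℝ | ∃ Y : Set G, MeasurableSet Y ∧ 0 < μ Y ∧ μ Y < 1 ∧
    r = (eG μ ν Y).toReal / ((μ Y).toReal * (1 - (μ Y).toReal)) }

/-- `ρ(ν) = ‖M_ν‖` on `L²₀(G,μ)`. -/
noncomputable def rhoG {G : Type*} [Group G] [MeasurableSpace G]
    (μ ν : Measure G) : ℝ :=
  sSup { r : ℝ | ∃ f : G → ℝ, MemLp f 2 μ ∧ (∫ x, f x ∂μ) = 0 ∧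
    (∫ x, f x ^ 2 ∂μ) ≠ 0 ∧
    r = Real.sqrt ((∫ x, (∫ g, f (x * g) ∂ν) ^ 2 ∂μ) / (∫ x, f x ^ 2 ∂μ)) }

set_option linter.unusedSectionVars false

section Helpers

open Filter Set
open scoped symmDiff Pointwise Topology

variable {G : Type*} [Group G] [TopologicalSpace G] [IsTopologicalGroup G]
    [CompactSpace G] [MeasurableSpace G] [BorelSpace G]

/-- On a compact group, a Haar probability measure is right invariant. -/
lemma haar_right_invariant (μ : Measure G) [μ.IsHaarMeasure] [IsProbabilityMeasure μ] :
    μ.IsMulRightInvariant := by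
  constructor
  intro g
  haveI : IsProbabilityMeasure (Measure.map (· * g) μ) :=
    Measure.isProbabilityMeasure_map (measurable_mul_const g).aemeasurable
  have h2 := Measure.isMulInvariant_eq_smul_of_compactSpace (Measure.map (· * g) μ) μ
  have h3 := congrArg (fun ν : Measure G => ν Set.univ) h2
  simp only [measure_univ, Measure.smul_apply, ENNReal.smul_def, smul_eq_mul, mul_one] at h3
  have hc : (Measure.map (· * g) μ).haarScalarFactor μ = 1 := by
    have := h3.symm
    rwa [ENNReal.coe_eq_one] at this
  rw [h2, hc, one_smul]

/-- On a compact group, the Haar probability measure is inversion invariant. -/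
lemma haar_inv_eq (μ : Measure G) [μ.IsHaarMeasure] [IsProbabilityMeasure μ]
    [μ.IsMulRightInvariant] : μ.inv = μ := by
  haveI : IsProbabilityMeasure μ.inv := by
    constructor
    rw [Measure.inv_apply]
    simp
  have h2 := Measure.isMulInvariant_eq_smul_of_compactSpace μ.inv μ
  have h3 := congrArg (fun ν : Measure G => ν Set.univ) h2
  simp only [measure_univ, Measure.smul_apply, ENNReal.smul_def, smul_eq_mul, mul_one] at h3
  have hc : (μ.inv).haarScalarFactor μ = 1 := by
    have := h3.symm
    rwa [ENNReal.coe_eq_one] at this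
  rw [h2, hc, one_smul]

/-- The family of right translations, as a continuous family of continuous maps. -/
noncomputable def rightMulCM : C(G, C(G, G)) :=
  (ContinuousMap.mk (fun p : G × G => p.2 * p.1)
    (continuous_snd.mul continuous_fst)).curry

lemma rightMulCM_coe (g : G) : ⇑(rightMulCM g) = fun x => x * g := rfl

lemma rightMulCM_mp (μ : Measure G) [μ.IsMulRightInvariant] (g : G) :
    MeasurePreserving (rightMulCM g) μ μ :=
  measurePreserving_mul_right μ g

variable (μ : Measure G) [μ.IsHaarMeasure] [IsProbabilityMeasure μ]

/-- Continuity of `g ↦ μ((·g)⁻¹ Z ∩ Z)`. -/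
lemma cont_inter_toReal [μ.IsMulRightInvariant] {Z : Set G} (hZ : MeasurableSet Z) :
    Continuous fun g : G => (μ ((fun x => x * g) ⁻¹' Z ∩ Z)).toReal := by
  rw [continuous_iff_continuousAt]
  intro g₀
  have key := tendsto_measure_symmDiff_preimage_nhds_zero (μ := μ) (ν := μ) (l := 𝓝 g₀)
    ((map_continuous rightMulCM).tendsto g₀) (.of_forall (rightMulCM_mp μ))
    (rightMulCM_mp μ g₀) hZ.nullMeasurableSet (measure_ne_top μ Z)
  have key2 : Tendsto
      (fun g => (μ ((rightMulCM g ⁻¹' Z) ∆ (rightMulCM g₀ ⁻¹' Z))).toReal) (𝓝 g₀) (𝓝 0) := by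
    simpa [Function.comp_def] using (ENNReal.tendsto_toReal (a := 0) (by simp)).comp key
  have hA : ∀ g : G, MeasurableSet ((fun x => x * g) ⁻¹' Z) :=
    fun g => (measurable_mul_const g) hZ
  refine tendsto_iff_dist_tendsto_zero.mpr (squeeze_zero (fun _ => dist_nonneg) ?_ key2)
  intro g
  rw [Real.dist_eq]
  have hsub : (((fun x => x * g) ⁻¹' Z ∩ Z) ∆ ((fun x => x * g₀) ⁻¹' Z ∩ Z))
      ⊆ (((fun x => x * g) ⁻¹' Z) ∆ ((fun x => x * g₀) ⁻¹' Z)) := by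
    intro x hx
    simp only [Set.mem_symmDiff, Set.mem_inter_iff] at hx ⊢
    tauto
  calc |(μ ((fun x => x * g) ⁻¹' Z ∩ Z)).toReal - (μ ((fun x => x * g₀) ⁻¹' Z ∩ Z)).toReal|
      ≤ (μ (((fun x => x * g) ⁻¹' Z ∩ Z) ∆ ((fun x => x * g₀) ⁻¹' Z ∩ Z))).toReal :=
        abs_measureReal_sub_le_measureReal_symmDiff
          ((hA g).inter hZ).nullMeasurableSet ((hA g₀).inter hZ).nullMeasurableSet
    _ ≤ (μ ((rightMulCM g ⁻¹' Z) ∆ (rightMulCM g₀ ⁻¹' Z))).toReal := by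
        apply ENNReal.toReal_mono (measure_ne_top _ _)
        exact measure_mono hsub

/-- Measurability of `g ↦ μ(Zg \ Z)`. -/
lemma meas_translate_diff [μ.IsMulRightInvariant] {Z : Set G} (hZ : MeasurableSet Z) :
    Measurable (fun g : G => μ ((fun x => x * g) '' Z \ Z)) := by
  have hrw : (fun g : G => μ ((fun x => x * g) '' Z \ Z))
      = fun g : G => μ Z - ENNReal.ofReal ((μ ((fun x => x * g⁻¹) ⁻¹' Z ∩ Z)).toReal) := by
    funext g
    rw [ENNReal.ofReal_toReal (measure_ne_top _ _)]
    rw [Set.image_mul_right]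
    have h1 := measure_diff_add_inter (μ := μ) ((fun x => x * g⁻¹) ⁻¹' Z) hZ
    have h2 : μ ((fun x => x * g⁻¹) ⁻¹' Z) = μ Z := measure_preimage_mul_right μ g⁻¹ Z
    rw [h2] at h1
    exact ENNReal.eq_sub_of_add_eq (measure_ne_top _ _) h1
  rw [hrw]
  apply Measurable.sub measurable_const
  apply ENNReal.measurable_ofReal.comp
  exact ((cont_inter_toReal μ hZ).comp continuous_inv).measurable

/-- Integral of product of two `L²` functions is defined. -/
lemma integrable_mul_L2 {f g : G → ℝ} (hf : MemLp f 2 μ) (hg : MemLp g 2 μ) :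
    Integrable (fun x => f x * g x) μ := by
  have h := L2.integrable_inner (𝕜 := ℝ) (hf.toLp f) (hg.toLp g)
  refine h.congr ?_
  filter_upwards [hf.coeFn_toLp, hg.coeFn_toLp] with x h1 h2
  rw [h1, h2]
  simp [RCLike.inner_apply, mul_comm]

lemma corr_le_sq [μ.IsMulRightInvariant] {f : G → ℝ} (hf : MemLp f 2 μ) (g : G) :
    ∫ x, f (x * g) * f x ∂μ ≤ ∫ x, f x ^ 2 ∂μ := by
  have hmp := measurePreserving_mul_right μ g
  have hfg : MemLp (fun x => f (x * g)) 2 μ := hf.comp_measurePreserving hmp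
  have h1 : Integrable (fun x => f (x * g) * f x) μ := integrable_mul_L2 μ hfg hf
  have h2 : Integrable (fun x => f (x * g) ^ 2) μ := hfg.integrable_sq
  have h3 : Integrable (fun x => f x ^ 2) μ := hf.integrable_sq
  have key : ∫ x, f (x * g) ^ 2 ∂μ = ∫ x, f x ^ 2 ∂μ :=
    hmp.integral_comp (MeasurableEquiv.mulRight g).measurableEmbedding (fun y => f y ^ 2)
  have hb : ∀ x, f (x * g) * f x ≤ (f (x * g) ^ 2 + f x ^ 2) / 2 := fun x => by
    nlinarith [sq_nonneg (f (x * g) - f x)]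
  calc ∫ x, f (x * g) * f x ∂μ ≤ ∫ x, (f (x * g) ^ 2 + f x ^ 2) / 2 ∂μ :=
        integral_mono h1 ((h2.add h3).div_const 2) hb
    _ = ∫ x, f x ^ 2 ∂μ := by
        rw [integral_div, integral_add h2 h3, key]
        ring

lemma rho_set_bddAbove (ν : Measure G) [IsProbabilityMeasure ν] [μ.IsMulRightInvariant] :
    BddAbove { r : ℝ | ∃ f : G → ℝ, MemLp f 2 μ ∧ (∫ x, f x ∂μ) = 0 ∧
      (∫ x, f x ^ 2 ∂μ) ≠ 0 ∧
      r = (∫ g, (∫ x, f (x * g) * f x ∂μ) ∂ν) / (∫ x, f x ^ 2 ∂μ) } := by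
  refine ⟨1, fun r hr => ?_⟩
  obtain ⟨f, hf, -, hne, rfl⟩ := hr
  have hpos : 0 < ∫ x, f x ^ 2 ∂μ :=
    lt_of_le_of_ne (integral_nonneg fun x => sq_nonneg _) (Ne.symm hne)
  rw [div_le_one hpos]
  by_cases hint : Integrable (fun g => ∫ x, f (x * g) * f x ∂μ) ν
  · calc ∫ g, (∫ x, f (x * g) * f x ∂μ) ∂ν ≤ ∫ _g, (∫ x, f x ^ 2 ∂μ) ∂ν :=
          integral_mono hint (integrable_const _) (fun g => corr_le_sq μ hf g)
      _ = ∫ x, f x ^ 2 ∂μ := by simp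
  · rw [integral_undef hint]
    exact hpos.le

/-- Evaluation of the correlation integral. -/
lemma corr_eval [μ.IsMulRightInvariant] {Z : Set G} (hZ : MeasurableSet Z) (g : G) :
    ∫ x, (Z.indicator (fun _ => (1:ℝ)) (x * g) - (μ Z).toReal)
        * (Z.indicator (fun _ => (1:ℝ)) x - (μ Z).toReal) ∂μ
      = (μ ((fun x => x * g) ⁻¹' Z ∩ Z)).toReal - (μ Z).toReal ^ 2 := by
  set t := (μ Z).toReal with ht
  have hA : MeasurableSet ((fun x => x * g) ⁻¹' Z) := (measurable_mul_const g) hZ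
  have iZ : Integrable (Z.indicator fun _ => (1:ℝ)) μ := (integrable_const (1:ℝ)).indicator hZ
  have iA : Integrable (((fun x => x * g) ⁻¹' Z).indicator fun _ => (1:ℝ)) μ :=
    (integrable_const (1:ℝ)).indicator hA
  have iAZ : Integrable ((((fun x => x * g) ⁻¹' Z) ∩ Z).indicator fun _ => (1:ℝ)) μ :=
    (integrable_const (1:ℝ)).indicator (hA.inter hZ)
  have hpt : ∀ x, (Z.indicator (fun _ => (1:ℝ)) (x * g) - t)
      * (Z.indicator (fun _ => (1:ℝ)) x - t)
      = (((fun x => x * g) ⁻¹' Z) ∩ Z).indicator (fun _ => (1:ℝ)) x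
        - t * ((fun x => x * g) ⁻¹' Z).indicator (fun _ => (1:ℝ)) x
        - t * Z.indicator (fun _ => (1:ℝ)) x + t * t := by
    intro x
    by_cases h1 : x * g ∈ Z <;> by_cases h2 : x ∈ Z <;>
      simp [Set.indicator_apply, h1, h2] <;> ring
  have j2 : Integrable (fun x => t * ((fun x => x * g) ⁻¹' Z).indicator (fun _ => (1:ℝ)) x) μ :=
    iA.const_mul t
  have j3 : Integrable (fun x => t * Z.indicator (fun _ => (1:ℝ)) x) μ := iZ.const_mul t
  have j4 : Integrable (fun x => (((fun x => x * g) ⁻¹' Z) ∩ Z).indicator (fun _ => (1:ℝ)) x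
      - t * ((fun x => x * g) ⁻¹' Z).indicator (fun _ => (1:ℝ)) x) μ := iAZ.sub j2
  have j5 : Integrable (fun x => (((fun x => x * g) ⁻¹' Z) ∩ Z).indicator (fun _ => (1:ℝ)) x
      - t * ((fun x => x * g) ⁻¹' Z).indicator (fun _ => (1:ℝ)) x
      - t * Z.indicator (fun _ => (1:ℝ)) x) μ := j4.sub j3
  rw [integral_congr_ae (Filter.EventuallyEq.of_eq (funext hpt))]
  rw [integral_add j5 (integrable_const (t * t)), integral_sub j4 j3, integral_sub iAZ j2,
    integral_const_mul, integral_const_mul,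
    integral_indicator_const (1:ℝ) (hA.inter hZ), integral_indicator_const (1:ℝ) hA,
    integral_indicator_const (1:ℝ) hZ, integral_const, measureReal_def, measureReal_def, measureReal_def,
    measureReal_def, measure_preimage_mul_right μ g Z, measure_univ]
  simp only [smul_eq_mul, mul_one, one_smul, ENNReal.toReal_one, ← ht]
  ring

end Helpers

section Spectral

open Filter Set
open scoped symmDiff Pointwise Topology

variable {G : Type*} [Group G] [TopologicalSpace G] [IsTopologicalGroup G]
    [CompactSpace G] [MeasurableSpace G] [BorelSpace G]

lemma spectral_contradiction (μ : Measure G) [μ.IsHaarMeasure] [IsProbabilityMeasure μ]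
    [μ.IsMulRightInvariant]
    (lam lam₁ lam₂ : Measure G) [IsProbabilityMeasure lam]
    [IsProbabilityMeasure lam₁] [IsProbabilityMeasure lam₂]
    (κ : ℝ) (hκ1 : κ ≤ 1)
    (hκ : 2 * rhoPlusG μ lam ≤ κ) (hκpos : 0 < κ)
    (hdec : lam = ENNReal.ofReal κ • lam₁ + ENNReal.ofReal (1 - κ) • lam₂)
    {Z : Set G} (hZ : MeasurableSet Z) (hZ0 : μ Z ≠ 0) (hZsmall : (μ Z).toReal < κ / 3)
    (haeZ : ∀ᵐ g ∂lam₁, μ ((fun x => x * g) ⁻¹' Z ∩ Z) = μ Z) : False := by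
  set t := (μ Z).toReal with ht
  have ht0 : 0 < t := ENNReal.toReal_pos hZ0 (measure_ne_top μ Z)
  have ht1 : t < 1 := by linarith
  -- the test function
  set F : G → ℝ := fun x => Z.indicator (fun _ => (1:ℝ)) x - t with hF
  have hFL2 : MemLp F 2 μ :=
    (memLp_indicator_const 2 hZ (1:ℝ) (Or.inr (measure_ne_top μ Z))).sub (memLp_const t)
  have hint0 : ∫ x, F x ∂μ = 0 := by
    rw [hF]
    rw [integral_sub ((memLp_indicator_const 2 hZ (1:ℝ)
      (Or.inr (measure_ne_top μ Z))).integrable one_le_two) (integrable_const t),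
      integral_indicator_const (1:ℝ) hZ, integral_const, probReal_univ, measureReal_def]
    simp [ht]
  have hsq : ∫ x, F x ^ 2 ∂μ = t - t ^ 2 := by
    have hid : ∀ x : G, F x ^ 2 = (Z.indicator (fun _ => (1:ℝ)) (x * 1) - t)
        * (Z.indicator (fun _ => (1:ℝ)) x - t) := fun x => by rw [mul_one, hF, sq]
    rw [integral_congr_ae (Filter.EventuallyEq.of_eq (funext hid)), corr_eval μ hZ 1]
    have hset : (fun x : G => x * 1) ⁻¹' Z ∩ Z = Z := by
      ext x; simp
    rw [hset, ← ht]
  have hsqpos : 0 < t - t ^ 2 := by nlinarith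
  -- the correlation function
  set corr : G → ℝ := fun g => (μ ((fun x => x * g) ⁻¹' Z ∩ Z)).toReal - t ^ 2 with hcorrdef
  have hcorr_eq : (fun g => ∫ x, F (x * g) * F x ∂μ) = corr := funext fun g => corr_eval μ hZ g
  have hcont : Continuous corr := (cont_inter_toReal μ hZ).sub continuous_const
  have hb : ∀ g, ‖corr g‖ ≤ 1 + t ^ 2 := by
    intro g
    have h1 : (0:ℝ) ≤ (μ ((fun x => x * g) ⁻¹' Z ∩ Z)).toReal := ENNReal.toReal_nonneg
    have h2 : (μ ((fun x => x * g) ⁻¹' Z ∩ Z)).toReal ≤ 1 := by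
      have := ENNReal.toReal_mono (a := μ ((fun x => x * g) ⁻¹' Z ∩ Z)) ENNReal.one_ne_top
        prob_le_one
      simpa using this
    have hcg : corr g = (μ ((fun x => x * g) ⁻¹' Z ∩ Z)).toReal - t ^ 2 := rfl
    rw [Real.norm_eq_abs, abs_le, hcg]
    constructor <;> nlinarith [sq_nonneg t]
  have hintcorr : ∀ (ν : Measure G) [IsProbabilityMeasure ν], Integrable corr ν := by
    intro ν _
    exact Integrable.mono' (integrable_const (1 + t ^ 2)) hcont.aestronglyMeasurable
      (Filter.Eventually.of_forall hb)
  -- integral over lam₁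
  have h1 : ∫ g, corr g ∂lam₁ = t - t ^ 2 := by
    have he : corr =ᵐ[lam₁] fun _ => t - t ^ 2 := by
      filter_upwards [haeZ] with g hg
      have hcg : corr g = (μ ((fun x => x * g) ⁻¹' Z ∩ Z)).toReal - t ^ 2 := rfl
      rw [hcg, hg, ← ht]
    rw [integral_congr_ae he, integral_const, probReal_univ]
    simp
  -- integral over lam₂
  have h2 : -(t ^ 2) ≤ ∫ g, corr g ∂lam₂ := by
    have := integral_mono (μ := lam₂) (integrable_const (-(t ^ 2))) (hintcorr lam₂)
      (fun g => by
        have hcg : corr g = (μ ((fun x => x * g) ⁻¹' Z ∩ Z)).toReal - t ^ 2 := rfl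
        have h0 : (0:ℝ) ≤ (μ ((fun x => x * g) ⁻¹' Z ∩ Z)).toReal := ENNReal.toReal_nonneg
        rw [hcg]
        linarith)
    simpa using this
  -- integral over lam
  have hlam : ∫ g, corr g ∂lam = κ * (t - t ^ 2) + (1 - κ) * ∫ g, corr g ∂lam₂ := by
    rw [hdec, integral_add_measure ((hintcorr lam₁).smul_measure ENNReal.ofReal_ne_top)
      ((hintcorr lam₂).smul_measure ENNReal.ofReal_ne_top), integral_smul_measure,
      integral_smul_measure, ENNReal.toReal_ofReal hκpos.le,
      ENNReal.toReal_ofReal (by linarith : (0:ℝ) ≤ 1 - κ), h1]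
    simp [smul_eq_mul]
  -- membership in the spectral set
  have hne : ∫ x, F x ^ 2 ∂μ ≠ 0 := by rw [hsq]; exact ne_of_gt hsqpos
  set r : ℝ := (∫ g, (∫ x, F (x * g) * F x ∂μ) ∂lam) / (∫ x, F x ^ 2 ∂μ) with hr
  have hmem : r ∈ { r : ℝ | ∃ f : G → ℝ, MemLp f 2 μ ∧ (∫ x, f x ∂μ) = 0 ∧
      (∫ x, f x ^ 2 ∂μ) ≠ 0 ∧
      r = (∫ g, (∫ x, f (x * g) * f x ∂μ) ∂lam) / (∫ x, f x ^ 2 ∂μ) } :=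
    ⟨F, hFL2, hint0, hne, rfl⟩
  have hrho : r ≤ rhoPlusG μ lam := le_csSup (rho_set_bddAbove μ lam) hmem
  -- numerics
  have hrlow : κ / 2 < r := by
    rw [hr, hsq]
    have hIc : (∫ g, (∫ x, F (x * g) * F x ∂μ) ∂lam) = ∫ g, corr g ∂lam := by rw [hcorr_eq]
    rw [hIc, hlam, lt_div_iff₀ hsqpos]
    have e2 : t ^ 2 < (κ / 3) * t := by nlinarith
    have e3 : (κ / 3) * t ≤ (κ / 2) * (1 - t) * t := by nlinarith
    nlinarith [h2, mul_le_mul_of_nonneg_left h2 (by linarith : (0:ℝ) ≤ 1 - κ)]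
  linarith [hκ, hrho, hrlow]

end Spectral

open Filter Set
open scoped symmDiff Pointwise Topology

theorem convex_part_ergodic {G : Type*} [Group G] [TopologicalSpace G]
    [IsTopologicalGroup G] [CompactSpace G] [ConnectedSpace G]
    [MeasurableSpace G] [BorelSpace G]
    (μ : Measure G) [μ.IsHaarMeasure] [IsProbabilityMeasure μ]
    (lam lam₁ lam₂ : Measure G) [IsProbabilityMeasure lam]
    [IsProbabilityMeasure lam₁] [IsProbabilityMeasure lam₂]
    (κ : ℝ) (hκ1 : κ ≤ 1)
    (hκ : 2 * rhoPlusG μ lam ≤ κ) (hρpos : 0 < rhoPlusG μ lam)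
    (hdec : lam = ENNReal.ofReal κ • lam₁ + ENNReal.ofReal (1 - κ) • lam₂) :
    ∀ Y : Set G, MeasurableSet Y → eG μ lam₁ Y = 0 → μ Y = 0 ∨ μ Y = 1 := by
  intro Y hY h0
  haveI hRI : μ.IsMulRightInvariant := haar_right_invariant μ
  have hκpos : 0 < κ := lt_of_lt_of_le (by linarith) hκ
  -- the a.e. stabilizer
  set S : Set G := {g : G | (fun x => x * g) ⁻¹' Y =ᵐ[μ] Y} with hSdef
  have hone : (1 : G) ∈ S := by
    have : (fun x : G => x * 1) ⁻¹' Y = Y := by ext x; simp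
    simpa [hSdef, this] using Filter.EventuallyEq.refl (ae μ) Y
  have hmulmem : ∀ {g h : G}, g ∈ S → h ∈ S → g * h ∈ S := by
    intro g h hg hh
    have hcomp : (fun x : G => x * (g * h)) ⁻¹' Y
        = (fun x : G => x * g) ⁻¹' ((fun x : G => x * h) ⁻¹' Y) := by
      ext x; simp [mul_assoc]
    have : (fun x : G => x * g) ⁻¹' ((fun x : G => x * h) ⁻¹' Y) =ᵐ[μ]
        (fun x : G => x * g) ⁻¹' Y :=
      (measurePreserving_mul_right μ g).quasiMeasurePreserving.preimage_ae_eq hh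
    rw [hSdef]
    exact Set.mem_setOf.mpr (by rw [hcomp]; exact this.trans hg)
  have hinvmem : ∀ {g : G}, g ∈ S → g⁻¹ ∈ S := by
    intro g hg
    have h1 : (fun x : G => x * g⁻¹) ⁻¹' ((fun x : G => x * g) ⁻¹' Y) =ᵐ[μ]
        (fun x : G => x * g⁻¹) ⁻¹' Y :=
      (measurePreserving_mul_right μ g⁻¹).quasiMeasurePreserving.preimage_ae_eq hg
    have h2 : (fun x : G => x * g⁻¹) ⁻¹' ((fun x : G => x * g) ⁻¹' Y) = Y := by
      ext x; simp
    rw [hSdef]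
    exact Set.mem_setOf.mpr (h2 ▸ h1).symm
  -- S is closed
  have hclosed : IsClosed S := by
    have := isClosed_setOf_preimage_ae_eq (μ := μ) (ν := μ) (f := fun g : G => rightMulCM g)
      (map_continuous rightMulCM) (rightMulCM_mp μ) Y hY.nullMeasurableSet (measure_ne_top μ Y)
    exact this
  -- a.e. g belongs to S
  have hmeas : AEMeasurable (fun g => μ ((fun x => x * g) '' Y \ Y)) lam₁ :=
    (meas_translate_diff μ hY).aemeasurable
  have hae0 : ∀ᵐ g ∂lam₁, μ ((fun x => x * g) '' Y \ Y) = 0 := by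
    have h0' : ∫⁻ g, μ ((fun x => x * g) '' Y \ Y) ∂lam₁ = 0 := h0
    have := (lintegral_eq_zero_iff' hmeas).mp h0'
    filter_upwards [this] with g hg using hg
  have haeS : ∀ᵐ g ∂lam₁, g ∈ S := by
    filter_upwards [hae0] with g hg
    have himg : (fun x => x * g) '' Y = (fun x : G => x * g⁻¹) ⁻¹' Y := Set.image_mul_right
    set T : Set G := (fun x : G => x * g⁻¹) ⁻¹' Y with hTdef
    have hTY : μ (T \ Y) = 0 := by rwa [himg] at hg
    have hTmeas : MeasurableSet T := (measurable_mul_const g⁻¹) hY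
    have hTμ : μ T = μ Y := measure_preimage_mul_right μ g⁻¹ Y
    have hUnion : μ (Y ∪ T) = μ Y := by
      refine le_antisymm ?_ (measure_mono Set.subset_union_left)
      calc μ (Y ∪ T) = μ (Y ∪ (T \ Y)) := by rw [Set.union_diff_self]
        _ ≤ μ Y + μ (T \ Y) := measure_union_le _ _
        _ = μ Y := by rw [hTY, add_zero]
    have hYT : μ (Y \ T) = 0 := by
      have hsub : Y \ T ⊆ (Y ∪ T) \ T := Set.diff_subset_diff_left Set.subset_union_left
      have : μ ((Y ∪ T) \ T) = μ (Y ∪ T) - μ T :=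
        measure_diff Set.subset_union_right hTmeas.nullMeasurableSet (measure_ne_top μ T)
      rw [hUnion, hTμ, tsub_self] at this
      exact measure_mono_null hsub this
    have hTae : T =ᵐ[μ] Y := (MeasureTheory.ae_eq_set).mpr ⟨hTY, hYT⟩
    have hginv : g⁻¹ ∈ S := Set.mem_setOf.mpr hTae
    have := hinvmem hginv
    rwa [inv_inv] at this
  by_cases hSuniv : S = Set.univ
  · -- case 1 : Y is a.e. invariant under all right translations
    have hinv_eq : μ.inv = μ := haar_inv_eq μ
    set ν : Measure G := μ.restrict Y with hν
    haveI hνRI : ν.IsMulRightInvariant := by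
      constructor
      intro g
      ext A hA
      have hgS : g ∈ S := hSuniv ▸ Set.mem_univ g
      have hae : ((fun x : G => x * g) ⁻¹' A ∩ Y : Set G) =ᵐ[μ]
          (((fun x : G => x * g) ⁻¹' A ∩ (fun x : G => x * g) ⁻¹' Y : Set G)) :=
        ae_eq_set_inter (ae_eq_refl _) (EventuallyEq.symm hgS)
      rw [Measure.map_apply (measurable_mul_const g) hA, hν,
        Measure.restrict_apply' hY, Measure.restrict_apply' hY, measure_congr hae,
        ← Set.preimage_inter, measure_preimage_mul_right μ g (A ∩ Y)]
    haveI : IsFiniteMeasure ν.inv := by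
      constructor
      rw [Measure.inv_apply]
      exact lt_of_le_of_lt (measure_mono (Set.subset_univ _)) (measure_lt_top ν Set.univ)
    have hunique := Measure.isMulInvariant_eq_smul_of_compactSpace ν.inv μ
    have key : ∀ A : Set G, μ (A ∩ Y) = ((ν.inv).haarScalarFactor μ : ℝ≥0∞) * μ A := by
      intro A
      have e1 : μ (A ∩ Y) = ν A := (Measure.restrict_apply' hY).symm
      have e2 : ν A = ν.inv A⁻¹ := by rw [Measure.inv_apply, inv_inv]
      have e3 : ν.inv A⁻¹ = ((ν.inv).haarScalarFactor μ : ℝ≥0∞) * μ A⁻¹ := by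
        have := congrArg (fun m : Measure G => m A⁻¹) hunique
        rw [this, Measure.smul_apply, ENNReal.smul_def, smul_eq_mul]
      have e4 : μ A⁻¹ = μ A := by
        rw [← Measure.inv_apply, hinv_eq]
      rw [e1, e2, e3, e4]
    have hcY : ((ν.inv).haarScalarFactor μ : ℝ≥0∞) = μ Y := by
      have := key Set.univ
      simpa using this.symm
    have hcompl := key Yᶜ
    rw [Set.compl_inter_self, hcY, measure_empty] at hcompl
    have := mul_eq_zero.mp hcompl.symm
    rcases this with h | h
    · exact Or.inl h
    · exact Or.inr ((prob_compl_eq_zero_iff hY).mp h)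
  · -- case 2 : S is a proper closed subgroup
    exfalso
    let H : Subgroup G :=
      { carrier := S
        mul_mem' := hmulmem
        one_mem' := hone
        inv_mem' := hinvmem }
    have hH0 : μ S = 0 := by
      by_contra hpos
      have hpos' : 0 < μ S := pos_iff_ne_zero.mpr hpos
      have hdiv : S / S ∈ 𝓝 (1 : G) :=
        Measure.div_mem_nhds_one_of_haar_pos μ S hclosed.measurableSet hpos'
      have hmemnhds : S ∈ 𝓝 (1 : G) := by
        refine Filter.mem_of_superset hdiv ?_
        rintro x hx
        rw [Set.mem_div] at hx
        obtain ⟨a, ha, b, hb, rfl⟩ := hx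
        exact H.div_mem ha hb
      have hopen : IsOpen S := H.isOpen_of_mem_nhds hmemnhds
      exact hSuniv (IsClopen.eq_univ ⟨hclosed, hopen⟩ ⟨1, hone⟩)
    -- a small open set containing S
    have hε : (0 : ℝ≥0∞) < ENNReal.ofReal (κ / 3) := ENNReal.ofReal_pos.mpr (by linarith)
    obtain ⟨V, hSV, hVopen, hVsmall⟩ :=
      Set.exists_isOpen_lt_of_lt S (ENNReal.ofReal (κ / 3)) (by rw [hH0]; exact hε)
    have hHcompact : IsCompact S := hclosed.isCompact
    obtain ⟨W, hW1, hWsub⟩ := compact_open_separated_mul_left hHcompact hVopen hSV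
    obtain ⟨U, hUW, hUopen, hU1⟩ := mem_nhds_iff.mp hW1
    set Z : Set G := U * S with hZdef
    have hZopen : IsOpen Z := hUopen.mul_right
    have hZne : (1 : G) ∈ Z := ⟨1, hU1, 1, hone, mul_one 1⟩
    have hZ0 : μ Z ≠ 0 := (hZopen.measure_pos μ ⟨1, hZne⟩).ne'
    have hZV : Z ⊆ V := (Set.mul_subset_mul_right hUW).trans hWsub
    have hZsmall' : μ Z < ENNReal.ofReal (κ / 3) := lt_of_le_of_lt (measure_mono hZV) hVsmall
    have hZsmall : (μ Z).toReal < κ / 3 := by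
      rw [← ENNReal.lt_ofReal_iff_toReal_lt (measure_ne_top μ Z)]
      exact hZsmall'
    have hZinv : ∀ g ∈ S, (fun x : G => x * g) ⁻¹' Z = Z := by
      intro g hg
      ext x
      simp only [Set.mem_preimage]
      constructor
      · intro hx
        obtain ⟨u, hu, s, hs, heq⟩ := hx
        have heq' : u * s = x * g := heq
        refine ⟨u, hu, s * g⁻¹, hmulmem hs (hinvmem hg), ?_⟩
        show u * (s * g⁻¹) = x
        rw [← mul_assoc, heq']
        group
      · intro hx
        obtain ⟨u, hu, s, hs, heq⟩ := hx
        have heq' : u * s = x := heq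
        refine ⟨u, hu, s * g, hmulmem hs hg, ?_⟩
        show u * (s * g) = x * g
        rw [← mul_assoc, heq']
    have haeZ : ∀ᵐ g ∂lam₁, μ ((fun x => x * g) ⁻¹' Z ∩ Z) = μ Z := by
      filter_upwards [haeS] with g hg
      rw [hZinv g hg, Set.inter_self]
    exact spectral_contradiction μ lam lam₁ lam₂ κ hκ1 hκ hκpos hdec
      hZopen.measurableSet hZ0 hZsmall haeZ
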